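/- arXiv:1207.2681 — 2 statements merged into one kernel-verified Lean document; each statement's English description precedes it below -/
import Mathlib

section
/- Let Ψ, Ψ̃ ∈ K^{m×n}, let x* ∈ K^n be s-sparse with support J*, let z ∈ K^m and y = Ψx* + z. Then for every index j ∈ {1,…,n} one has |(Ψ̃*y)_j − (x*)_j| ≤ θ_{s+1}(Ψ̃*Ψ)·‖x*‖₂ + (max_{1≤l≤n} ‖ψ̃_l‖₂)·‖z‖₂. -/
open scoped BigOperators
open Matrix MeasureTheory

noncomputable section

namespace ObliquePursuit

variable {𝕜 : Type*} [RCLike 𝕜]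

/-- The Euclidean (`ℓ²`) norm of a finitely indexed vector. -/
def l2 {ι : Type*} [Fintype ι] (x : ι → 𝕜) : ℝ :=
  Real.sqrt (∑ i, ‖x i‖ ^ 2)

/-- The spectral (`ℓ² → ℓ²` operator) norm of a matrix. -/
def specNorm {ι κ : Type*} [Fintype ι] [Fintype κ] [DecidableEq κ]
    (M : Matrix ι κ 𝕜) : ℝ :=
  ‖LinearMap.toContinuousLinearMap (Matrix.toEuclideanLin M)‖

/-- `x` is `s`-sparse: it has at most `s` nonzero entries. -/
def Sparse {ι : Type*} (s : ℕ) (x : ι → 𝕜) : Prop :=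
  ∃ J : Finset ι, J.card ≤ s ∧ ∀ i, x i ≠ 0 → i ∈ J

/-- The `s`-restricted biorthogonality constant `θ_s(M)`: the smallest `δ ≥ 0` such that
`|⟨y, Mx⟩ − ⟨y, x⟩| ≤ δ‖x‖₂‖y‖₂` for all `x, y` supported on a common index set of
cardinality at most `s`. -/
def theta {ι : Type*} [Fintype ι] (s : ℕ) (M : Matrix ι ι 𝕜) : ℝ :=
  sInf {δ : ℝ | 0 ≤ δ ∧ ∀ J : Finset ι, J.card ≤ s →
    ∀ x y : ι → 𝕜, (∀ i, x i ≠ 0 → i ∈ J) → (∀ i, y i ≠ 0 → i ∈ J) →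
      ‖star y ⬝ᵥ M.mulVec x - star y ⬝ᵥ x‖ ≤ δ * l2 x * l2 y}

/-- The `s`-restricted isometry constant `δ_s(Ψ)`. -/
def ric {ι κ : Type*} [Fintype ι] [Fintype κ] (s : ℕ) (Ψ : Matrix ι κ 𝕜) : ℝ :=
  sInf {δ : ℝ | 0 ≤ δ ∧ ∀ x : κ → 𝕜, Sparse s x →
    (1 - δ) * l2 x ^ 2 ≤ l2 (Ψ.mulVec x) ^ 2 ∧
      l2 (Ψ.mulVec x) ^ 2 ≤ (1 + δ) * l2 x ^ 2}

/-- Coordinate projection `Π_J`: keep the entries indexed by `J`, zero out the others. -/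
def proj {ι : Type*} [DecidableEq ι] (J : Finset ι) (x : ι → 𝕜) : ι → 𝕜 :=
  fun i => if i ∈ J then x i else 0

/-- The column submatrix `Ψ_J` of `Ψ` formed by the columns indexed by `J`. -/
def cols {ι κ : Type*} (Ψ : Matrix ι κ 𝕜) (J : Finset κ) :
    Matrix ι {j // j ∈ J} 𝕜 :=
  Ψ.submatrix id fun j => (j : κ)

/-- The `j`-th column of `Ψ`. -/
def col {ι κ : Type*} (Ψ : Matrix ι κ 𝕜) (j : κ) : ι → 𝕜 :=
  fun i => Ψ i j

/-- The complementary oblique projector `E = I − Ψ_J (Ψ̃_J^* Ψ_J)⁻¹ Ψ̃_J^*`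
(equal to `I` when `J = ∅`). -/
def obliqueE {ι κ : Type*} [Fintype ι] [DecidableEq ι] [DecidableEq κ]
    (Ψ Ψt : Matrix ι κ 𝕜) (J : Finset κ) : Matrix ι ι 𝕜 :=
  1 - cols Ψ J * ((cols Ψt J)ᴴ * cols Ψ J)⁻¹ * (cols Ψt J)ᴴ

/-- The smallest (real) eigenvalue of a matrix. -/
def lamMin {ι : Type*} [Fintype ι] (G : Matrix ι ι 𝕜) : ℝ :=
  sInf {r : ℝ | ∃ v : ι → 𝕜, v ≠ 0 ∧ G.mulVec v = (r : 𝕜) • v}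

/-- The `j`-th largest singular value (1-indexed) of a matrix, characterized via the
Eckart–Young–Mirsky theorem: `σ_j(A) = min { ‖A − B‖ : rank B < j }` where `‖·‖` is the
spectral norm. -/
def singVal {ι κ : Type*} [Fintype ι] [Fintype κ] [DecidableEq κ]
    (A : Matrix ι κ 𝕜) (j : ℕ) : ℝ :=
  sInf {r : ℝ | ∃ B : Matrix ι κ 𝕜, B.rank < j ∧ r = specNorm (A - B)}

lemma l2_nonneg {ι : Type*} [Fintype ι] (x : ι → 𝕜) : 0 ≤ l2 x :=
  Real.sqrt_nonneg _

lemma entry_le_l2 {ι : Type*} [Fintype ι] (x : ι → 𝕜) (i : ι) : ‖x i‖ ≤ l2 x := by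
  have h : ‖x i‖ ^ 2 ≤ ∑ k, ‖x k‖ ^ 2 :=
    Finset.single_le_sum (f := fun k => ‖x k‖ ^ 2) (fun k _ => by positivity)
      (Finset.mem_univ i)
  calc ‖x i‖ = Real.sqrt (‖x i‖ ^ 2) := by rw [Real.sqrt_sq (norm_nonneg _)]
    _ ≤ l2 x := Real.sqrt_le_sqrt h

lemma norm_dot_le {ι : Type*} [Fintype ι] (y x : ι → 𝕜) :
    ‖star y ⬝ᵥ x‖ ≤ l2 x * l2 y := by
  have h := norm_inner_le_norm (𝕜 := 𝕜)
    ((WithLp.equiv 2 (ι → 𝕜)).symm y) ((WithLp.equiv 2 (ι → 𝕜)).symm x)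
  simpa [PiLp.inner_apply, RCLike.inner_apply, EuclideanSpace.norm_eq,
    dotProduct, l2, mul_comm] using h

lemma dot_mulVec_le {ι : Type*} [Fintype ι] [DecidableEq ι] (A : Matrix ι ι 𝕜) (x y : ι → 𝕜) :
    ‖star y ⬝ᵥ A.mulVec x‖ ≤ (∑ i, ∑ k, ‖A i k‖) * (l2 x * l2 y) := by
  calc ‖star y ⬝ᵥ A.mulVec x‖ = ‖∑ i, ∑ k, star (y i) * (A i k * x k)‖ := by
        simp [dotProduct, Matrix.mulVec, Finset.mul_sum]
    _ ≤ ∑ i, ‖∑ k, star (y i) * (A i k * x k)‖ := norm_sum_le _ _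
    _ ≤ ∑ i, ∑ k, ‖star (y i) * (A i k * x k)‖ :=
        Finset.sum_le_sum fun i _ => norm_sum_le _ _
    _ ≤ ∑ i, ∑ k, ‖A i k‖ * (l2 x * l2 y) := by
        refine Finset.sum_le_sum fun i _ => Finset.sum_le_sum fun k _ => ?_
        rw [norm_mul, norm_mul, norm_star]
        calc ‖y i‖ * (‖A i k‖ * ‖x k‖) ≤ l2 y * (‖A i k‖ * l2 x) :=
              mul_le_mul (entry_le_l2 y i)
                (mul_le_mul_of_nonneg_left (entry_le_l2 x k) (norm_nonneg _))
                (by positivity) (l2_nonneg y)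
          _ = ‖A i k‖ * (l2 x * l2 y) := by ring
    _ = (∑ i, ∑ k, ‖A i k‖) * (l2 x * l2 y) := by simp [Finset.sum_mul]

lemma theta_bound {ι : Type*} [Fintype ι] [DecidableEq ι] (s : ℕ) (M : Matrix ι ι 𝕜)
    (J : Finset ι) (hJ : J.card ≤ s) (x y : ι → 𝕜)
    (hx : ∀ i, x i ≠ 0 → i ∈ J) (hy : ∀ i, y i ≠ 0 → i ∈ J) :
    ‖star y ⬝ᵥ M.mulVec x - star y ⬝ᵥ x‖ ≤ theta s M * l2 x * l2 y := by
  set S : Set ℝ := {δ : ℝ | 0 ≤ δ ∧ ∀ J : Finset ι, J.card ≤ s →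
    ∀ x y : ι → 𝕜, (∀ i, x i ≠ 0 → i ∈ J) → (∀ i, y i ≠ 0 → i ∈ J) →
      ‖star y ⬝ᵥ M.mulVec x - star y ⬝ᵥ x‖ ≤ δ * l2 x * l2 y} with hS
  set C : ℝ := ∑ i, ∑ k, ‖(M - 1) i k‖ with hC
  have hCnn : 0 ≤ C := Finset.sum_nonneg fun i _ =>
    Finset.sum_nonneg fun k _ => norm_nonneg _
  have hkey : ∀ x' y' : ι → 𝕜,
      ‖star y' ⬝ᵥ M.mulVec x' - star y' ⬝ᵥ x'‖ ≤ C * l2 x' * l2 y' := by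
    intro x' y'
    have he : star y' ⬝ᵥ M.mulVec x' - star y' ⬝ᵥ x'
        = star y' ⬝ᵥ (M - 1).mulVec x' := by
      rw [Matrix.sub_mulVec, Matrix.one_mulVec, dotProduct_sub]
    rw [he, mul_assoc]
    exact dot_mulVec_le _ _ _
  have hmem : C ∈ S := ⟨hCnn, fun J' _ x' y' _ _ => hkey x' y'⟩
  have hne : S.Nonempty := ⟨C, hmem⟩
  have hcnn : (0:ℝ) ≤ l2 x * l2 y := mul_nonneg (l2_nonneg x) (l2_nonneg y)
  rcases hcnn.eq_or_lt with hc | hc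
  · have h1 := hkey x y
    have hθnn : 0 ≤ theta s M := Real.sInf_nonneg fun δ hδ => hδ.1
    rw [mul_assoc, ← hc, mul_zero] at h1 ⊢
    exact h1
  · have hle : ‖star y ⬝ᵥ M.mulVec x - star y ⬝ᵥ x‖ / (l2 x * l2 y) ≤ theta s M := by
      refine le_csInf hne fun δ hδ => ?_
      rw [div_le_iff₀ hc]
      have := hδ.2 J hJ x y hx hy
      rwa [mul_assoc] at this
    rw [mul_assoc]
    exact (div_le_iff₀ hc).mp hle

/-- entrywise error bound for the proxy `Ψ̃* y`. -/
theorem statement0 (m n s : ℕ) (Ψ Ψt : Matrix (Fin m) (Fin n) 𝕜)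
    (xstar : Fin n → 𝕜) (Jstar : Finset (Fin n))
    (hsupp : ∀ i, xstar i ≠ 0 ↔ i ∈ Jstar) (hcard : Jstar.card ≤ s)
    (z y : Fin m → 𝕜) (hy : y = Ψ.mulVec xstar + z) :
    ∀ j : Fin n,
      ‖Ψtᴴ.mulVec y j - xstar j‖ ≤
        theta (s + 1) (Ψtᴴ * Ψ) * l2 xstar + (⨆ l, l2 (col Ψt l)) * l2 z := by

  intro j
  subst hy
  set M := Ψtᴴ * Ψ with hM
  have hMV : Ψtᴴ.mulVec (Ψ.mulVec xstar + z) = M.mulVec xstar + Ψtᴴ.mulVec z := by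
    rw [Matrix.mulVec_add, Matrix.mulVec_mulVec]
  set e : Fin n → 𝕜 := fun i => if i = j then 1 else 0 with he
  have hdot : ∀ v : Fin n → 𝕜, star e ⬝ᵥ v = v j := by
    intro v
    simp [dotProduct, he, apply_ite]
  have hl2e : l2 e = 1 := by
    have : ∑ i, ‖e i‖ ^ 2 = 1 := by
      simp [he, apply_ite (fun t : 𝕜 => ‖t‖ ^ 2)]
    simp [l2, this]
  -- first term
  have hJ : (insert j Jstar).card ≤ s + 1 := by
    calc (insert j Jstar).card ≤ Jstar.card + 1 := Finset.card_insert_le _ _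
      _ ≤ s + 1 := by omega
  have h1 : ‖M.mulVec xstar j - xstar j‖ ≤ theta (s + 1) M * l2 xstar := by
    have := theta_bound (s + 1) M (insert j Jstar) hJ xstar e
      (fun i hi => Finset.mem_insert_of_mem ((hsupp i).mp hi))
      (fun i hi => by
        by_cases hij : i = j
        · exact hij ▸ Finset.mem_insert_self j Jstar
        · simp [he, hij] at hi)
    rwa [hdot, hdot, hl2e, mul_one] at this
  -- second term
  have h2 : ‖Ψtᴴ.mulVec z j‖ ≤ (⨆ l, l2 (col Ψt l)) * l2 z := by
    have he2 : Ψtᴴ.mulVec z j = star (col Ψt j) ⬝ᵥ z := by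
      simp [Matrix.mulVec, dotProduct, col, Matrix.conjTranspose_apply]
    rw [he2]
    calc ‖star (col Ψt j) ⬝ᵥ z‖ ≤ l2 z * l2 (col Ψt j) := norm_dot_le _ _
      _ ≤ l2 z * ⨆ l, l2 (col Ψt l) := by
          gcongr
          · exact l2_nonneg z
          · exact le_ciSup (f := fun l => l2 (col Ψt l)) (Set.Finite.bddAbove (Set.finite_range _)) j
      _ = (⨆ l, l2 (col Ψt l)) * l2 z := mul_comm _ _
  calc ‖Ψtᴴ.mulVec (Ψ.mulVec xstar + z) j - xstar j‖
      = ‖(M.mulVec xstar j - xstar j) + Ψtᴴ.mulVec z j‖ := by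
        rw [hMV]; congr 1; simp only [Pi.add_apply]; ring
    _ ≤ ‖M.mulVec xstar j - xstar j‖ + ‖Ψtᴴ.mulVec z j‖ := norm_add_le _ _
    _ ≤ theta (s + 1) M * l2 xstar + (⨆ l, l2 (col Ψt l)) * l2 z := add_le_add h1 h2
end ObliquePursuit
end
end

section
/- (Guarantee of Oblique Thresholding.) Let Ψ, Ψ̃ ∈ K^{m×n}, let x* ∈ K^n be s-sparse with support J*, let z ∈ K^m and y = Ψx* + z. Suppose that min_{j∈J*} |(x*)_j| > 2·θ_{s+1}(Ψ̃*Ψ)·‖x*‖₂ + 2·(max_{1≤l≤n} ‖ψ̃_l‖₂)·‖z‖₂. Then for every j ∈ J* and every l ∈ {1,…,n}\J* one has |(Ψ̃*y)_j| > |(Ψ̃*y)_l|; i.e., oblique thresholding (taking the indices of the |J*| largest-magnitude entries of Ψ̃*y) identifies J* exactly. -/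
open scoped BigOperators
open Matrix MeasureTheory

noncomputable section

namespace ObliquePursuit

variable {𝕜 : Type*} [RCLike 𝕜]

section Helpers

lemma l2_eq_norm {ι : Type*} [Fintype ι] (x : ι → 𝕜) :
    l2 x = ‖(WithLp.equiv 2 (ι → 𝕜)).symm x‖ := by
  rw [EuclideanSpace.norm_eq]; rfl

lemma l2_zero {ι : Type*} [Fintype ι] : l2 (0 : ι → 𝕜) = 0 := by
  simp [l2]

lemma l2_eq_zero {ι : Type*} [Fintype ι] {x : ι → 𝕜} (h : l2 x = 0) : x = 0 := by
  rw [l2] at h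
  have hs : ∑ i, ‖x i‖ ^ 2 = 0 :=
    le_antisymm (Real.sqrt_eq_zero'.mp h) (by positivity)
  funext i
  have := (Finset.sum_eq_zero_iff_of_nonneg (fun i _ => sq_nonneg ‖x i‖)).mp hs i
    (Finset.mem_univ i)
  simpa using this

lemma cauchy {ι : Type*} [Fintype ι] (y x : ι → 𝕜) :
    ‖star y ⬝ᵥ x‖ ≤ l2 y * l2 x := by
  have := norm_inner_le_norm (𝕜 := 𝕜)
    ((WithLp.equiv 2 (ι → 𝕜)).symm y) ((WithLp.equiv 2 (ι → 𝕜)).symm x)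
  rw [WithLp.equiv_symm_apply, EuclideanSpace.inner_toLp_toLp, dotProduct_comm] at this
  rw [l2_eq_norm, l2_eq_norm]
  exact this

lemma l2_mulVec_le {ι κ : Type*} [Fintype ι] [Fintype κ] [DecidableEq κ]
    (M : Matrix ι κ 𝕜) (x : κ → 𝕜) :
    l2 (M.mulVec x) ≤ specNorm M * l2 x := by
  rw [l2_eq_norm, l2_eq_norm]
  have h : (WithLp.equiv 2 (ι → 𝕜)).symm (M.mulVec x)
      = LinearMap.toContinuousLinearMap (Matrix.toEuclideanLin M)
        ((WithLp.equiv 2 (κ → 𝕜)).symm x) := rfl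
  rw [h]
  exact (LinearMap.toContinuousLinearMap (Matrix.toEuclideanLin M)).le_opNorm _

lemma thetaSet_mem {ι : Type*} [Fintype ι] [DecidableEq ι] (s : ℕ) (M : Matrix ι ι 𝕜) :
    (specNorm M + 1) ∈ {δ : ℝ | 0 ≤ δ ∧ ∀ J : Finset ι, J.card ≤ s →
      ∀ x y : ι → 𝕜, (∀ i, x i ≠ 0 → i ∈ J) → (∀ i, y i ≠ 0 → i ∈ J) →
        ‖star y ⬝ᵥ M.mulVec x - star y ⬝ᵥ x‖ ≤ δ * l2 x * l2 y} := by
  constructor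
  · have h0 : (0:ℝ) ≤ specNorm M := by rw [specNorm]; exact norm_nonneg _
    linarith
  · intro J hJ x y hx hy
    calc ‖star y ⬝ᵥ M.mulVec x - star y ⬝ᵥ x‖
        ≤ ‖star y ⬝ᵥ M.mulVec x‖ + ‖star y ⬝ᵥ x‖ := norm_sub_le _ _
      _ ≤ l2 y * l2 (M.mulVec x) + l2 y * l2 x :=
          add_le_add (cauchy _ _) (cauchy _ _)
      _ ≤ l2 y * (specNorm M * l2 x) + l2 y * l2 x := by
          have := l2_mulVec_le M x
          have h0 := l2_nonneg y
          nlinarith [l2_nonneg (M.mulVec x)]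
      _ = (specNorm M + 1) * l2 x * l2 y := by ring

lemma theta_nonneg {ι : Type*} [Fintype ι] [DecidableEq ι] (s : ℕ) (M : Matrix ι ι 𝕜) :
    0 ≤ theta s M :=
  le_csInf ⟨_, thetaSet_mem s M⟩ fun _ hδ => hδ.1

lemma theta_le {ι : Type*} [Fintype ι] [DecidableEq ι] {s : ℕ} (M : Matrix ι ι 𝕜)
    {J : Finset ι} (hJ : J.card ≤ s) {x y : ι → 𝕜}
    (hx : ∀ i, x i ≠ 0 → i ∈ J) (hy : ∀ i, y i ≠ 0 → i ∈ J) :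
    ‖star y ⬝ᵥ M.mulVec x - star y ⬝ᵥ x‖ ≤ theta s M * l2 x * l2 y := by
  rcases eq_or_lt_of_le (l2_nonneg x) with h0x | h0x
  · have hx0 : x = 0 := l2_eq_zero h0x.symm
    simp [hx0, l2_zero]
  rcases eq_or_lt_of_le (l2_nonneg y) with h0y | h0y
  · have hy0 : y = 0 := l2_eq_zero h0y.symm
    simp [hy0, l2_zero]
  have hc : 0 < l2 x * l2 y := mul_pos h0x h0y
  have key : ‖star y ⬝ᵥ M.mulVec x - star y ⬝ᵥ x‖ / (l2 x * l2 y) ≤ theta s M := by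
    apply le_csInf ⟨_, thetaSet_mem s M⟩
    intro δ hδ
    rw [div_le_iff₀ hc]
    calc ‖star y ⬝ᵥ M.mulVec x - star y ⬝ᵥ x‖ ≤ δ * l2 x * l2 y := hδ.2 J hJ x y hx hy
      _ = δ * (l2 x * l2 y) := by ring
  rw [div_le_iff₀ hc] at key
  calc ‖star y ⬝ᵥ M.mulVec x - star y ⬝ᵥ x‖ ≤ theta s M * (l2 x * l2 y) := key
    _ = theta s M * l2 x * l2 y := by ring

lemma dot_single {ι : Type*} [Fintype ι] [DecidableEq ι] (k : ι) (v : ι → 𝕜) :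
    star (Pi.single k (1 : 𝕜)) ⬝ᵥ v = v k := by
  simp [dotProduct, Pi.single_apply, apply_ite (star : 𝕜 → 𝕜)]

lemma l2_single {ι : Type*} [Fintype ι] [DecidableEq ι] (k : ι) :
    l2 (Pi.single k (1 : 𝕜)) = 1 := by
  have h : ∀ i, ‖(Pi.single k (1:𝕜) : ι → 𝕜) i‖ ^ 2 = if i = k then 1 else 0 := by
    intro i; by_cases hik : i = k
    · subst hik; rw [Pi.single_eq_same]; simp
    · simp [hik]
  simp [l2, h]

end Helpers

/-- guarantee of Oblique Thresholding. -/
theorem statement1 (m n s : ℕ) (Ψ Ψt : Matrix (Fin m) (Fin n) 𝕜)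
    (xstar : Fin n → 𝕜) (Jstar : Finset (Fin n))
    (hsupp : ∀ i, xstar i ≠ 0 ↔ i ∈ Jstar) (hcard : Jstar.card ≤ s)
    (z y : Fin m → 𝕜) (hy : y = Ψ.mulVec xstar + z)
    (hmin : ∀ j ∈ Jstar,
      2 * theta (s + 1) (Ψtᴴ * Ψ) * l2 xstar
          + 2 * (⨆ l, l2 (col Ψt l)) * l2 z < ‖xstar j‖) :
    ∀ j ∈ Jstar, ∀ l, l ∉ Jstar → ‖Ψtᴴ.mulVec y l‖ < ‖Ψtᴴ.mulVec y j‖ := by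
  intro j hj l hl
  set M : Matrix (Fin n) (Fin n) 𝕜 := Ψtᴴ * Ψ with hM
  set θ : ℝ := theta (s + 1) M with hθ
  set C : ℝ := ⨆ k, l2 (col Ψt k) with hC
  set L : ℝ := l2 xstar with hL
  set Z : ℝ := l2 z with hZ
  -- decomposition of the measurement vector
  have hΨty : ∀ k, Ψtᴴ.mulVec y k = M.mulVec xstar k + star (col Ψt k) ⬝ᵥ z := by
    intro k
    have h1 : Ψtᴴ.mulVec (Ψ.mulVec xstar) = M.mulVec xstar := by
      rw [hM, ← Matrix.mulVec_mulVec]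
    have h2 : Ψtᴴ.mulVec z k = star (col Ψt k) ⬝ᵥ z := by
      simp [Matrix.mulVec, dotProduct, Matrix.conjTranspose_apply, col]
    rw [hy, Matrix.mulVec_add, Pi.add_apply, h1, h2]
  -- theta bound for each coordinate
  have hθk : ∀ k : Fin n, ‖M.mulVec xstar k - xstar k‖ ≤ θ * L := by
    intro k
    have hJcard : (insert k Jstar).card ≤ s + 1 :=
      le_trans (Finset.card_insert_le _ _) (by omega)
    have hx : ∀ i, xstar i ≠ 0 → i ∈ insert k Jstar := fun i hi =>
      Finset.mem_insert_of_mem ((hsupp i).mp hi)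
    have hyk : ∀ i, (Pi.single k (1 : 𝕜) : Fin n → 𝕜) i ≠ 0 → i ∈ insert k Jstar := by
      intro i hi
      by_cases h : i = k
      · subst h; exact Finset.mem_insert_self _ _
      · exact absurd (show (Pi.single k (1 : 𝕜) : Fin n → 𝕜) i = 0 by
          simp [Pi.single_apply, h]) hi
    have := theta_le M hJcard hx hyk
    rw [dot_single, dot_single, l2_single] at this
    calc ‖M.mulVec xstar k - xstar k‖ ≤ θ * L * 1 := this
      _ = θ * L := by ring
  -- noise bound for each coordinate
  have hCk : ∀ k : Fin n, ‖star (col Ψt k) ⬝ᵥ z‖ ≤ C * Z := by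
    intro k
    have h1 : l2 (col Ψt k) ≤ C := by
      rw [hC]; exact le_ciSup (f := fun k => l2 (col Ψt k)) (Set.Finite.bddAbove (Set.finite_range _)) k
    exact le_trans (cauchy _ _) (mul_le_mul_of_nonneg_right h1 (l2_nonneg z))
  have hθ0 : 0 ≤ θ := theta_nonneg _ _
  have hL0 : 0 ≤ L := l2_nonneg _
  have hZ0 : 0 ≤ Z := l2_nonneg _
  have hC0 : 0 ≤ C := by
    refine le_trans (l2_nonneg (col Ψt l)) ?_
    rw [hC]; exact le_ciSup (f := fun k => l2 (col Ψt k)) (Set.Finite.bddAbove (Set.finite_range _)) l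
  -- upper bound at l
  have hxl : xstar l = 0 := by
    by_contra h; exact hl ((hsupp l).mp h)
  have hup : ‖Ψtᴴ.mulVec y l‖ ≤ θ * L + C * Z := by
    rw [hΨty l]
    calc ‖M.mulVec xstar l + star (col Ψt l) ⬝ᵥ z‖
        ≤ ‖M.mulVec xstar l‖ + ‖star (col Ψt l) ⬝ᵥ z‖ := norm_add_le _ _
      _ ≤ θ * L + C * Z := by
          refine add_le_add ?_ (hCk l)
          have := hθk l
          rwa [hxl, sub_zero] at this
  -- lower bound at j
  have hlow : ‖xstar j‖ - θ * L - C * Z ≤ ‖Ψtᴴ.mulVec y j‖ := by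
    have hdecomp : xstar j = Ψtᴴ.mulVec y j - (M.mulVec xstar j - xstar j)
        - star (col Ψt j) ⬝ᵥ z := by
      rw [hΨty j]; ring
    have h1 : ‖xstar j‖ ≤ ‖Ψtᴴ.mulVec y j‖ + ‖M.mulVec xstar j - xstar j‖
        + ‖star (col Ψt j) ⬝ᵥ z‖ := by
      nth_rewrite 1 [hdecomp]
      exact le_trans (norm_sub_le _ _) (add_le_add_left (norm_sub_le _ _) _)
    have h2 := hθk j
    have h3 := hCk j
    linarith
  have hgap := hmin j hj
  linarith [hup, hlow, hgap]
end ObliquePursuit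
end
end
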